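/- arXiv:2402.13792 — 3 statements merged into one kernel-verified Lean document; each statement's English description precedes it below -/
import Mathlib

section
/- Let V be a finite nonempty type of cardinality m and E : V → V → Prop a directed edge relation satisfying: (Check 1) every vertex has at most one outgoing edge, i.e., for every x the set {y | E x y} has at most one element; (Check 2) every vertex has at most one incoming edge, i.e., for every y the set {x | E x y} has at most one element; (Check 3) E is acyclic, i.e., the transitive closure of E is irreflexive; and the number of edges, i.e., the cardinality of {p : V × V | E p.1 p.2}, equals m - 1. Then there exists an enumeration f : Fin m ≃ V such that for all x y, E x y holds if and only if there exists i with i + 1 < m, x = f i and y = f (i+1); that is, the graph is a single directed path (a straight-line chain) visiting every vertex exactly once. -/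
open Relation

universe u

private lemma stmt1_no_cycle {V : Type u} [Finite V] {E : V → V → Prop}
    (hirr : Irreflexive (Relation.TransGen E)) (W : Set V) (hW : W.Nonempty)
    (hsucc : ∀ v ∈ W, ∃ w ∈ W, E v w) : False := by
  classical
  choose g hg1 hg2 using hsucc
  obtain ⟨v0, hv0⟩ := hW
  set G : W → W := fun v => ⟨g v.1 v.2, hg1 v.1 v.2⟩ with hG
  have key : ∀ (n : ℕ) (a : W), Relation.TransGen E a.1 (G^[n + 1] a).1 := by
    intro n
    induction n with
    | zero => intro a; exact TransGen.single (hg2 a.1 a.2)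
    | succ n ih =>
      intro a
      rw [Function.iterate_succ_apply]
      exact (TransGen.single (hg2 a.1 a.2)).trans (ih (G a))
  obtain ⟨i, j, hne, heq⟩ :=
    Finite.exists_ne_map_eq_of_infinite (fun n : ℕ => G^[n] ⟨v0, hv0⟩)
  wlog hij : i < j generalizing i j
  · exact this j i hne.symm heq.symm (by omega)
  have h1 : G^[(j - i - 1) + 1] (G^[i] ⟨v0, hv0⟩) = G^[i] ⟨v0, hv0⟩ := by
    have h2 : (j - i - 1) + 1 = j - i := by omega
    rw [h2, ← Function.iterate_add_apply]
    have h3 : j - i + i = j := by omega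
    rw [h3, ← heq]
  have := key (j - i - 1) (G^[i] ⟨v0, hv0⟩)
  rw [h1] at this
  exact hirr _ this

private theorem stmt1_key : ∀ (m : ℕ) (V : Type u) [Fintype V],
    Fintype.card V = m → ∀ (E : V → V → Prop),
    (∀ x : V, {y : V | E x y}.Subsingleton) →
    (∀ y : V, {x : V | E x y}.Subsingleton) →
    Irreflexive (Relation.TransGen E) →
    Nat.card {p : V × V // E p.1 p.2} = m - 1 →
    ∃ f : Fin m ≃ V, ∀ x y, E x y ↔ ∃ i : ℕ, ∃ h : i + 1 < m,
      x = f ⟨i, Nat.lt_of_succ_lt h⟩ ∧ y = f ⟨i + 1, h⟩ := by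
  intro m
  induction m with
  | zero =>
    intro V _ hcard E _ _ _ _
    haveI : IsEmpty V := Fintype.card_eq_zero_iff.mp hcard
    exact ⟨Equiv.equivOfIsEmpty _ _, fun x y => (IsEmpty.false x).elim⟩
  | succ m ih =>
    intro V _ hcard E check1 check2 check3 hedges
    classical
    haveI : Nonempty V := Fintype.card_pos_iff.mp (by omega)
    haveI : IsTrans V (Relation.TransGen E) := ⟨fun _ _ _ => TransGen.trans⟩
    haveI : IsIrrefl V (Relation.TransGen E) := ⟨check3⟩
    have wfT : WellFounded (Relation.TransGen E) :=
      Finite.wellFounded_of_trans_of_irrefl _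
    have wfE : WellFounded E := Subrelation.wf (fun h => TransGen.single h) wfT
    obtain ⟨s, -, hs⟩ := wfE.has_min Set.univ ⟨Classical.arbitrary V, trivial⟩
    have hsrc : ∀ x : V, ¬ E x s := fun x hx => hs x trivial hx
    rw [Nat.add_sub_cancel] at hedges
    by_cases hout : ∃ t, E s t
    · obtain ⟨t, hst⟩ := hout
      have hts : t ≠ s := fun h => hsrc t (h ▸ hst)
      set V' := {v : V // v ≠ s} with hV'
      have hcard' : Fintype.card V' = m := by
        have h1 : Fintype.card V = Fintype.card (Option V') :=
          Fintype.card_congr (Equiv.optionSubtypeNe s).symm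
        rw [Fintype.card_option] at h1
        omega
      set E' : V' → V' → Prop := fun a b => E a.1 b.1 with hE'
      -- count edges of E'
      set X := {q : V' × V' // E' q.1 q.2} with hX
      haveI : Finite {p : V × V // E p.1 p.2} := Subtype.finite
      haveI : Finite X := Subtype.finite
      have hφ : ∃ φ : Option X → {p : V × V // E p.1 p.2}, Function.Bijective φ := by
        refine ⟨fun o => o.elim ⟨(s, t), hst⟩ (fun q => ⟨(q.1.1.1, q.1.2.1), q.2⟩), ?_, ?_⟩
        · rintro (_ | a) (_ | b) h
          · rfl
          · exfalso
            have := congrArg (fun p => p.1.1) h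
            exact b.1.1.2 this.symm
          · exfalso
            have := congrArg (fun p => p.1.1) h
            exact a.1.1.2 this
          · have h1 := congrArg (fun p => p.1.1) h
            have h2 := congrArg (fun p => p.1.2) h
            simp only [Option.elim] at h1 h2
            congr 1
            exact Subtype.ext (Prod.ext (Subtype.ext h1) (Subtype.ext h2))
        · rintro ⟨⟨x, y⟩, hxy⟩
          by_cases hx : x = s
          · subst hx
            have hy : y = t := check1 x hxy hst
            exact ⟨none, by simp [Option.elim, hy]⟩
          · have hy : y ≠ s := fun h => hsrc x (h ▸ hxy)
            exact ⟨some ⟨(⟨x, hx⟩, ⟨y, hy⟩), hxy⟩, rfl⟩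
      obtain ⟨φ, hφbij⟩ := hφ
      have hcount : Nat.card X + 1 = m := by
        have := Nat.card_congr (Equiv.ofBijective φ hφbij)
        rw [Finite.card_option, hedges] at this
        exact this
      have hm : 0 < m := by omega
      have hX' : Nat.card X = m - 1 := by omega
      -- checks for E'
      have check1' : ∀ x : V', {y : V' | E' x y}.Subsingleton :=
        fun x y1 h1 y2 h2 => Subtype.ext (check1 x.1 h1 h2)
      have check2' : ∀ y : V', {x : V' | E' x y}.Subsingleton :=
        fun y x1 h1 x2 h2 => Subtype.ext (check2 y.1 h1 h2)
      have check3' : Irreflexive (Relation.TransGen E') := by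
        intro a ha
        exact check3 a.1 (TransGen.lift Subtype.val (fun _ _ h => h) _ _ ha)
      obtain ⟨f', hf'⟩ := ih V' hcard' E' check1' check2' check3' hX'
      -- t is the start of the chain of E'
      set tV' : V' := ⟨t, hts⟩ with htV'
      have hsrc' : ∀ x : V', ¬ E' x tV' := fun x hx => x.2 (check2 t hx hst)
      have ht0 : f' ⟨0, hm⟩ = tV' := by
        by_contra hne
        set j := f'.symm tV' with hj
        have hjval : j.1 ≠ 0 := by
          intro h0
          apply hne
          have : j = ⟨0, hm⟩ := Fin.ext h0
          rw [← this, hj, Equiv.apply_symm_apply]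
        obtain ⟨k, hk⟩ : ∃ k, j.1 = k + 1 := ⟨j.1 - 1, by omega⟩
        have hk1 : k + 1 < m := hk ▸ j.2
        have hedge : E' (f' ⟨k, Nat.lt_of_succ_lt hk1⟩) (f' ⟨k + 1, hk1⟩) :=
          (hf' _ _).mpr ⟨k, hk1, rfl, rfl⟩
        have : f' ⟨k + 1, hk1⟩ = tV' := by
          have : (⟨k + 1, hk1⟩ : Fin m) = j := Fin.ext hk.symm
          rw [this, hj, Equiv.apply_symm_apply]
        rw [this] at hedge
        exact hsrc' _ hedge
      -- build the full enumeration
      set f : Fin (m + 1) ≃ V :=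
        (finSuccEquiv m).trans ((f'.optionCongr).trans (Equiv.optionSubtypeNe s)) with hf
      have f0 : ∀ h0 : 0 < m + 1, f ⟨0, h0⟩ = s := by
        intro h0
        have : (⟨0, h0⟩ : Fin (m + 1)) = 0 := Fin.ext rfl
        rw [this, hf]
        simp only [Equiv.trans_apply, finSuccEquiv_zero, Equiv.optionCongr_apply,
          Option.map_none]
        rfl
      have fs' : ∀ (k : ℕ) (hk : k + 1 < m + 1),
          f ⟨k + 1, hk⟩ = (f' ⟨k, Nat.succ_lt_succ_iff.mp hk⟩).1 := by
        intro k hk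
        have : (⟨k + 1, hk⟩ : Fin (m + 1)) = Fin.succ ⟨k, Nat.succ_lt_succ_iff.mp hk⟩ :=
          Fin.ext rfl
        rw [this, hf]
        simp only [Equiv.trans_apply, finSuccEquiv_succ, Equiv.optionCongr_apply,
          Option.map_some]
        rfl
      refine ⟨f, fun x y => ⟨?_, ?_⟩⟩
      · intro hxy
        by_cases hx : x = s
        · subst hx
          have hy : y = t := check1 x hxy hst
          refine ⟨0, by omega, ?_, ?_⟩
          · rw [f0]
          · rw [fs' 0 (by omega)]
            have : f' ⟨0, Nat.succ_lt_succ_iff.mp (by omega : 0 + 1 < m + 1)⟩ = tV' := ht0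
            rw [this, hy]
        · have hy : y ≠ s := fun h => hsrc x (h ▸ hxy)
          have hE'xy : E' ⟨x, hx⟩ ⟨y, hy⟩ := hxy
          obtain ⟨j, hj, hx', hy'⟩ := (hf' _ _).mp hE'xy
          refine ⟨j + 1, by omega, ?_, ?_⟩
          · rw [fs' j (by omega)]
            have : (⟨x, hx⟩ : V') = f' ⟨j, Nat.succ_lt_succ_iff.mp (by omega : j + 1 < m + 1)⟩ := by
              rw [hx']
            exact congrArg Subtype.val this
          · rw [fs' (j + 1) (by omega)]
            have : (⟨y, hy⟩ : V') = f' ⟨j + 1, Nat.succ_lt_succ_iff.mp (by omega : j + 1 + 1 < m + 1)⟩ := by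
              rw [hy']
            exact congrArg Subtype.val this
      · rintro ⟨i, hi, hx, hy⟩
        cases i with
        | zero =>
          rw [f0] at hx
          rw [fs' 0 (by omega)] at hy
          have h0 : f' ⟨0, Nat.succ_lt_succ_iff.mp hi⟩ = tV' := ht0
          rw [h0] at hy
          rw [hx, hy]
          exact hst
        | succ k =>
          have hk1 : k + 1 < m := by omega
          rw [fs' k (by omega)] at hx
          rw [fs' (k + 1) (by omega)] at hy
          have hedge : E' (f' ⟨k, Nat.lt_of_succ_lt hk1⟩) (f' ⟨k + 1, hk1⟩) :=
            (hf' _ _).mpr ⟨k, hk1, rfl, rfl⟩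
          have hx2 : x = (f' ⟨k, Nat.lt_of_succ_lt hk1⟩).1 := hx
          have hy2 : y = (f' ⟨k + 1, hk1⟩).1 := hy
          rw [hx2, hy2]
          exact hedge
    · -- s has no outgoing edge: then m = 0 and there are no edges at all
      have hm0 : m = 0 := by
        by_contra hm0
        haveI : Finite {p : V × V // E p.1 p.2} := Subtype.finite
        haveI : Fintype {p : V × V // E p.1 p.2} := Fintype.ofFinite _
        set σ : {p : V × V // E p.1 p.2} → {v : V // v ≠ s} :=
          fun p => ⟨p.1.1, fun h => hout ⟨p.1.2, h ▸ p.2⟩⟩ with hσ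
        have hinj : Function.Injective σ := by
          rintro ⟨⟨a, b⟩, hab⟩ ⟨⟨c, d⟩, hcd⟩ h
          have h1 : a = c := congrArg Subtype.val h
          subst h1
          have h2 : b = d := check1 a hab hcd
          subst h2
          rfl
        have hcards : Fintype.card {p : V × V // E p.1 p.2} =
            Fintype.card {v : V // v ≠ s} := by
          have h1 : Fintype.card V = Fintype.card (Option {v : V // v ≠ s}) :=
            Fintype.card_congr (Equiv.optionSubtypeNe s).symm
          rw [Fintype.card_option] at h1
          rw [← Nat.card_eq_fintype_card, hedges]
          omega
        have hbij : Function.Bijective σ :=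
          (Fintype.bijective_iff_injective_and_card σ).mpr ⟨hinj, hcards⟩
        -- every vertex ≠ s has an outgoing edge to a vertex ≠ s
        obtain ⟨v0, hv0⟩ := Fintype.exists_ne_of_one_lt_card (by omega) s
        refine stmt1_no_cycle check3 {v : V | v ≠ s} ⟨v0, hv0⟩ ?_
        intro v hv
        obtain ⟨p, hp⟩ := hbij.2 ⟨v, hv⟩
        have hpv : p.1.1 = v := congrArg Subtype.val hp
        refine ⟨p.1.2, ?_, hpv ▸ p.2⟩
        exact fun h => hsrc p.1.1 (h ▸ p.2)
      subst hm0
      have hnoedge : ∀ x y : V, ¬ E x y := by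
        intro x y hxy
        haveI : Finite {p : V × V // E p.1 p.2} := Subtype.finite
        rcases Nat.card_eq_zero.mp hedges with h | h
        · exact h.false ⟨(x, y), hxy⟩
        · exact h.not_finite inferInstance
      exact ⟨(Fintype.equivFinOfCardEq hcard).symm,
        fun x y => ⟨fun h => (hnoedge x y h).elim, fun ⟨i, hi, _⟩ => by omega⟩⟩

/-- If a directed edge relation on a finite nonempty vertex set of
cardinality `m` satisfies the three checks (at most one outgoing edge per vertex,
at most one incoming edge per vertex, acyclicity) and has exactly `m - 1` edges,
then it is the consecutive-edge relation of some enumeration `f : Fin m ≃ V`,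
i.e., a single directed path visiting every vertex exactly once. -/
theorem stmt_1 (m : ℕ) (V : Type*) [Fintype V] [Nonempty V]
    (hcard : Fintype.card V = m) (E : V → V → Prop)
    (check1 : ∀ x : V, {y : V | E x y}.Subsingleton)
    (check2 : ∀ y : V, {x : V | E x y}.Subsingleton)
    (check3 : Irreflexive (Relation.TransGen E))
    (hedges : Nat.card {p : V × V // E p.1 p.2} = m - 1) :
    ∃ f : Fin m ≃ V, ∀ x y, E x y ↔ ∃ i : ℕ, ∃ h : i + 1 < m,
      x = f ⟨i, Nat.lt_of_succ_lt h⟩ ∧ y = f ⟨i + 1, h⟩ := by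
  exact stmt1_key m V hcard E check1 check2 check3 hedges
end

section
/- Let V be a finite nonempty type of cardinality m and E : V → V → Prop a directed edge relation satisfying the three checks — every vertex has at most one outgoing edge, every vertex has at most one incoming edge, and the transitive closure of E is irreflexive — and suppose the number of edges, i.e., the cardinality of {p : V × V | E p.1 p.2}, equals m - 1. Then there exists exactly one vertex with no outgoing edge (the last trace) and exactly one vertex with no incoming edge (the first trace). -/
/-- Under the three checks (at most one outgoing edge, at most one
incoming edge, acyclicity) and with exactly `m - 1` edges on `m` vertices, there
is exactly one vertex with no outgoing edge (the last trace) and exactly one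
vertex with no incoming edge (the first trace). -/
theorem stmt_5 (m : ℕ) (V : Type*) [Fintype V] [Nonempty V]
    (hcard : Fintype.card V = m) (E : V → V → Prop)
    (check1 : ∀ x : V, {y : V | E x y}.Subsingleton)
    (check2 : ∀ y : V, {x : V | E x y}.Subsingleton)
    (check3 : Irreflexive (Relation.TransGen E))
    (hedges : Nat.card {p : V × V // E p.1 p.2} = m - 1) :
    (∃! x : V, ∀ y : V, ¬ E x y) ∧ (∃! y : V, ∀ x : V, ¬ E x y) := by
  classical
  have hm : 1 ≤ m := hcard ▸ Fintype.card_pos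
  have hV : Nat.card V = m := by rw [Nat.card_eq_fintype_card, hcard]
  constructor
  · set S : Set V := {x | ∃ y, E x y} with hSdef
    have e : {p : V × V // E p.1 p.2} ≃ S := by
      refine Equiv.ofBijective (fun p => ⟨p.1.1, ⟨p.1.2, p.2⟩⟩) ⟨?_, ?_⟩
      · rintro ⟨⟨a, b⟩, hab⟩ ⟨⟨c, d⟩, hcd⟩ h
        simp only [Subtype.mk.injEq] at h
        subst h
        have : b = d := check1 a hab hcd
        simp [this]
      · rintro ⟨x, ⟨y, hxy⟩⟩
        exact ⟨⟨(x, y), hxy⟩, rfl⟩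
    have hS : S.ncard = m - 1 := by
      rw [← Nat.card_coe_set_eq, ← Nat.card_congr e, hedges]
    have hSc : Sᶜ.ncard = 1 := by
      have := Set.ncard_add_ncard_compl S
      rw [hV, hS] at this
      omega
    obtain ⟨a, ha⟩ := Set.ncard_eq_one.mp hSc
    refine ⟨a, ?_, ?_⟩
    · have : a ∈ Sᶜ := ha ▸ Set.mem_singleton a
      intro y hy
      exact this ⟨y, hy⟩
    · intro x hx
      have : x ∈ Sᶜ := fun ⟨y, hy⟩ => hx y hy
      rw [ha] at this
      exact this
  · set S : Set V := {y | ∃ x, E x y} with hSdef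
    have e : {p : V × V // E p.1 p.2} ≃ S := by
      refine Equiv.ofBijective (fun p => ⟨p.1.2, ⟨p.1.1, p.2⟩⟩) ⟨?_, ?_⟩
      · rintro ⟨⟨a, b⟩, hab⟩ ⟨⟨c, d⟩, hcd⟩ h
        simp only [Subtype.mk.injEq] at h
        subst h
        have : a = c := check2 b hab hcd
        simp [this]
      · rintro ⟨y, ⟨x, hxy⟩⟩
        exact ⟨⟨(x, y), hxy⟩, rfl⟩
    have hS : S.ncard = m - 1 := by
      rw [← Nat.card_coe_set_eq, ← Nat.card_congr e, hedges]
    have hSc : Sᶜ.ncard = 1 := by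
      have := Set.ncard_add_ncard_compl S
      rw [hV, hS] at this
      omega
    obtain ⟨a, ha⟩ := Set.ncard_eq_one.mp hSc
    refine ⟨a, ?_, ?_⟩
    · have : a ∈ Sᶜ := ha ▸ Set.mem_singleton a
      intro x hx
      exact this ⟨x, hx⟩
    · intro y hy
      have : y ∈ Sᶜ := fun ⟨x, hx⟩ => hy x hx
      rw [ha] at this
      exact this
end

section
/- Let V be a finite type of cardinality m and let f, g : Fin m ≃ V be two enumerations of V such that for all x y, (there exists i with i + 1 < m, x = f i and y = f (i+1)) if and only if (there exists i with i + 1 < m, x = g i and y = g (i+1)); that is, f and g induce the same consecutive-edge relation on V. Then f = g. In other words, a directed straight-line chain through all vertices determines its vertex ordering uniquely. -/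
/-- Two enumerations of a finite vertex set inducing the same
consecutive-edge relation are equal: a directed straight-line chain through all
vertices determines its vertex ordering uniquely. -/
theorem stmt_6 (m : ℕ) (V : Type*) [Fintype V] (f g : Fin m ≃ V)
    (h : ∀ x y : V,
      (∃ i : ℕ, ∃ h : i + 1 < m, x = f ⟨i, Nat.lt_of_succ_lt h⟩ ∧ y = f ⟨i + 1, h⟩) ↔
      (∃ i : ℕ, ∃ h : i + 1 < m, x = g ⟨i, Nat.lt_of_succ_lt h⟩ ∧ y = g ⟨i + 1, h⟩)) :
    f = g := by
  suffices H : ∀ k (hk : k < m), f ⟨k, hk⟩ = g ⟨k, hk⟩ by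
    ext i
    exact H i.1 i.2
  intro k
  induction k with
  | zero =>
    intro hk
    set j := g.symm (f ⟨0, hk⟩) with hj
    have hgj : g j = f ⟨0, hk⟩ := g.apply_symm_apply _
    rcases j with ⟨jv, hjv⟩
    match jv, hjv with
    | 0, hjv =>
      rw [← hgj]
    | t + 1, hjv =>
      exfalso
      obtain ⟨i, hi, hx, hy⟩ := (h (g ⟨t, Nat.lt_of_succ_lt hjv⟩) (g ⟨t + 1, hjv⟩)).mpr
        ⟨t, hjv, rfl, rfl⟩
      have : f ⟨i + 1, hi⟩ = f ⟨0, hk⟩ := by rw [← hy, hgj]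
      have := f.injective this
      simp at this
  | succ n ih =>
    intro hk
    have hn : n < m := Nat.lt_of_succ_lt hk
    obtain ⟨i, hi, hx, hy⟩ := (h (f ⟨n, hn⟩) (f ⟨n + 1, hk⟩)).mp ⟨n, hk, rfl, rfl⟩
    have hgi : g ⟨i, Nat.lt_of_succ_lt hi⟩ = g ⟨n, hn⟩ := by rw [← hx, ih hn]
    have hin : i = n := by
      have := g.injective hgi
      simpa using this
    subst hin
    rw [hy]
end
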